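/- Fix n ≥ 1 and let L = (ZMod 2)^n. Define D₂ : L^{n+1} → 𝔽₂ by D₂(k₁, …, k_{n+1}) := Σ_{1 ≤ i < j ≤ n+1} Δ_{ij}, where Δ_{ij} is the determinant over 𝔽₂ of the n×n matrix whose first n−1 columns are the vectors k₁, …, k_{n+1} with k_i and k_j omitted (in increasing order of index) and whose last column is the coordinatewise product of k_i and k_j. Then D₂ is GL-invariant, rank-vanishing, multilinear, and not identically zero. -/

import Mathlib

/-- `D` is invariant under the natural `GL(n, 𝔽₂)`-action on `(n+1)`-tuples of vectors of
`L = 𝔽₂ⁿ`. -/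
def GLInvariant (n : ℕ) (D : (Fin (n + 1) → Fin n → ZMod 2) → ZMod 2) : Prop :=
  ∀ (A : (Fin n → ZMod 2) ≃ₗ[ZMod 2] (Fin n → ZMod 2)) (k : Fin (n + 1) → Fin n → ZMod 2),
    D (fun t => A (k t)) = D k

/-- `D` vanishes on tuples whose span is a proper subspace of `L = 𝔽₂ⁿ` (rank `< n`). -/
def RankVanishing (n : ℕ) (D : (Fin (n + 1) → Fin n → ZMod 2) → ZMod 2) : Prop :=
  ∀ k : Fin (n + 1) → Fin n → ZMod 2,
    Submodule.span (ZMod 2) (Set.range k) ≠ ⊤ → D k = 0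

/-- `D` is multilinear: in each argument, with the others fixed, it is additive
(equivalently `𝔽₂`-linear). -/
def Multilinear (n : ℕ) (D : (Fin (n + 1) → Fin n → ZMod 2) → ZMod 2) : Prop :=
  ∀ (t : Fin (n + 1)) (k : Fin (n + 1) → Fin n → ZMod 2) (x y : Fin n → ZMod 2),
    D (Function.update k t (x + y)) = D (Function.update k t x) + D (Function.update k t y)

/-- For `i < j` in `{0, …, n}`, the `t`-th element (in increasing order) of
`{0, …, n} \ {i, j}`. -/
def omitTwo {n : ℕ} (i j : Fin (n + 1)) (t : Fin (n - 1)) : Fin (n + 1) :=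
  if (t : ℕ) < (i : ℕ) then ⟨t, by omega⟩
  else if (t : ℕ) + 1 < (j : ℕ) then ⟨(t : ℕ) + 1, by have := t.isLt; omega⟩
  else ⟨(t : ℕ) + 2, by have := t.isLt; omega⟩

/-- `Δ_{ij}`: the determinant over `𝔽₂` of the `n × n` matrix whose first `n - 1` columns are
`k₁, …, k_{n+1}` with `k_i`, `k_j` omitted (in increasing order of index) and whose last
column is the coordinatewise product of `k_i` and `k_j`. -/
def DeltaIJ (n : ℕ) (k : Fin (n + 1) → Fin n → ZMod 2) (i j : Fin (n + 1)) : ZMod 2 :=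
  Matrix.det (Matrix.of fun r c : Fin n =>
    if h : (c : ℕ) < n - 1 then k (omitTwo i j ⟨c, h⟩) r else k i r * k j r)

/-- `D₂(k₁, …, k_{n+1}) = ∑_{i < j} Δ_{ij}`. -/
def D₂ (n : ℕ) (k : Fin (n + 1) → Fin n → ZMod 2) : ZMod 2 :=
  ∑ p ∈ Finset.univ.filter (fun p : Fin (n + 1) × Fin (n + 1) => p.1 < p.2),
    DeltaIJ n k p.1 p.2

namespace Aux


lemma omitTwo_val {n : ℕ} (i j : Fin (n + 1)) (t : Fin (n - 1)) :
    ((omitTwo i j t : Fin (n+1)) : ℕ) =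
      if (t : ℕ) < (i : ℕ) then (t : ℕ)
      else if (t : ℕ) + 1 < (j : ℕ) then (t : ℕ) + 1 else (t : ℕ) + 2 := by
  unfold omitTwo; split_ifs <;> rfl

variable {m : ℕ}

lemma omitTwo_ne_left {i j : Fin (m + 2)} (hij : i < j) (t : Fin m) :
    omitTwo i j t ≠ i := by
  have := omitTwo_val i j t
  have hij' : (i : ℕ) < (j : ℕ) := hij
  intro h
  rw [Fin.ext_iff] at h
  rw [this] at h
  split_ifs at h <;> omega

lemma omitTwo_ne_right {i j : Fin (m + 2)} (hij : i < j) (t : Fin m) :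
    omitTwo i j t ≠ j := by
  have := omitTwo_val i j t
  have hij' : (i : ℕ) < (j : ℕ) := hij
  intro h
  rw [Fin.ext_iff] at h
  rw [this] at h
  split_ifs at h <;> omega

lemma omitTwo_inj {i j : Fin (m + 2)} (hij : i < j) {s t : Fin m}
    (h : omitTwo i j s = omitTwo i j t) : s = t := by
  have hs := omitTwo_val i j s
  have ht := omitTwo_val i j t
  have hij' : (i : ℕ) < (j : ℕ) := hij
  rw [Fin.ext_iff] at h
  rw [hs, ht] at h
  rw [Fin.ext_iff]
  split_ifs at h <;> omega

lemma omitTwo_surj {i j : Fin (m + 2)} (hij : i < j) {u : Fin (m+2)}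
    (hui : u ≠ i) (huj : u ≠ j) : ∃ t : Fin m, omitTwo i j t = u := by
  have hij' : (i : ℕ) < (j : ℕ) := hij
  have hui' : (u : ℕ) ≠ (i : ℕ) := fun h => hui (Fin.ext h)
  have huj' : (u : ℕ) ≠ (j : ℕ) := fun h => huj (Fin.ext h)
  have hj : (j : ℕ) < m + 2 := j.isLt
  have hu : (u : ℕ) < m + 2 := u.isLt
  by_cases h1 : (u:ℕ) < (i:ℕ)
  · exact ⟨⟨u, by omega⟩, by rw [Fin.ext_iff, omitTwo_val]; simp only; split_ifs <;> omega⟩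
  by_cases h2 : (u:ℕ) < (j:ℕ)
  · exact ⟨⟨(u:ℕ) - 1, by omega⟩, by rw [Fin.ext_iff, omitTwo_val]; simp only; split_ifs <;> omega⟩
  · exact ⟨⟨(u:ℕ) - 2, by omega⟩, by rw [Fin.ext_iff, omitTwo_val]; simp only; split_ifs <;> omega⟩


lemma succAbove_val {n : ℕ} (p : Fin (n+1)) (i : Fin n) :
    ((p.succAbove i : Fin (n+1)) : ℕ) = if (i : ℕ) < (p : ℕ) then (i : ℕ) else (i : ℕ) + 1 := by
  rcases Nat.lt_or_ge (i : ℕ) (p : ℕ) with h | h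
  · rw [Fin.succAbove_of_castSucc_lt _ _ (by simpa [Fin.lt_def] using h)]
    simp [h]
  · rw [Fin.succAbove_of_le_castSucc _ _ (by simpa [Fin.le_def] using h)]
    simp only [Fin.val_succ]
    rw [if_neg (by omega)]

lemma succAbove_succAbove_lt (i : Fin (m + 2)) (s : Fin (m + 1)) (v : Fin m)
    (h : i < i.succAbove s) :
    i.succAbove (s.succAbove v) = omitTwo i (i.succAbove s) v := by
  have h' : (i : ℕ) < ((i.succAbove s : Fin (m+2)) : ℕ) := h
  rw [succAbove_val] at h'
  rw [Fin.ext_iff]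
  simp only [omitTwo_val, succAbove_val]
  split_ifs at h' ⊢ <;> omega

lemma succAbove_succAbove_gt (i : Fin (m + 2)) (s : Fin (m + 1)) (v : Fin m)
    (h : i.succAbove s < i) :
    i.succAbove (s.succAbove v) = omitTwo (i.succAbove s) i v := by
  have h' : ((i.succAbove s : Fin (m+2)) : ℕ) < (i : ℕ) := h
  rw [succAbove_val] at h'
  rw [Fin.ext_iff]
  simp only [omitTwo_val, succAbove_val]
  split_ifs at h' ⊢ <;> omega

section Rows

variable {m : ℕ}

abbrev Vec (m : ℕ) := Fin (m+1) → ZMod 2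

/-- Rows form of the `Δ_{ij}` matrix. -/
def rowsOf (k : Fin (m+2) → Vec m) (i j : Fin (m+2)) : Fin (m+1) → Vec m :=
  Fin.snoc (fun c : Fin m => k (omitTwo i j c)) (k i * k j)

lemma deltaIJ_eq (k : Fin (m+2) → Vec m) (i j : Fin (m+2)) :
    DeltaIJ (m+1) k i j = (Matrix.of (rowsOf k i j)).det := by
  rw [DeltaIJ, ← Matrix.det_transpose]
  congr 1
  ext c r
  simp only [Matrix.transpose_apply, Matrix.of_apply, rowsOf]
  refine Fin.lastCases ?_ (fun v => ?_) c
  · rw [dif_neg (by simp), Fin.snoc_last, Pi.mul_apply]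
  · have hv : ((Fin.castSucc v : Fin (m+1)) : ℕ) < m + 1 - 1 := by simp
    have hvv : (⟨((Fin.castSucc v : Fin (m+1)) : ℕ), hv⟩ : Fin m) = v := Fin.ext (by simp)
    rw [dif_pos hv, hvv, Fin.snoc_castSucc]

lemma of_snoc_eq_updateRow (h : Fin m → Vec m) (x z : Vec m) :
    Matrix.of (Fin.snoc h z) = (Matrix.of (Fin.snoc h x)).updateRow (Fin.last m) z := by
  ext r c
  refine Fin.lastCases ?_ (fun v => ?_) r
  · simp
  · rw [Matrix.updateRow_ne (Fin.ne_of_lt (Fin.castSucc_lt_last v))]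
    simp

lemma det_snoc_add (h : Fin m → Vec m) (x y : Vec m) :
    (Matrix.of (Fin.snoc h (x + y))).det
      = (Matrix.of (Fin.snoc h x)).det + (Matrix.of (Fin.snoc h y)).det := by
  rw [of_snoc_eq_updateRow h x (x+y), Matrix.det_updateRow_add,
    ← of_snoc_eq_updateRow h x x, ← of_snoc_eq_updateRow h x y]

lemma det_snoc_smul (h : Fin m → Vec m) (s : ZMod 2) (x : Vec m) :
    (Matrix.of (Fin.snoc h (s • x))).det = s * (Matrix.of (Fin.snoc h x)).det := by
  rw [of_snoc_eq_updateRow h x (s • x), Matrix.det_updateRow_smul,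
    ← of_snoc_eq_updateRow h x x]

lemma of_update_eq_updateRow (w : Fin (m+1) → Vec m) (r : Fin (m+1)) (z : Vec m) :
    Matrix.of (Function.update w r z) = (Matrix.of w).updateRow r z := rfl

lemma det_snoc_update_add (h : Fin m → Vec m) (p : Vec m) (c₀ : Fin m) (x y : Vec m) :
    (Matrix.of (Fin.snoc (Function.update h c₀ (x + y)) p)).det
      = (Matrix.of (Fin.snoc (Function.update h c₀ x) p)).det
        + (Matrix.of (Fin.snoc (Function.update h c₀ y) p)).det := by
  rw [Fin.snoc_update, Fin.snoc_update, Fin.snoc_update,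
    of_update_eq_updateRow, of_update_eq_updateRow, of_update_eq_updateRow,
    Matrix.det_updateRow_add]

end Rows

section Multilin

variable {m : ℕ}

lemma deltaIJ_update_add (k : Fin (m+2) → Vec m) (t : Fin (m+2)) (x y : Vec m)
    (i j : Fin (m+2)) (hij : i < j) :
    DeltaIJ (m+1) (Function.update k t (x+y)) i j
      = DeltaIJ (m+1) (Function.update k t x) i j
        + DeltaIJ (m+1) (Function.update k t y) i j := by
  rw [deltaIJ_eq, deltaIJ_eq, deltaIJ_eq]
  by_cases hti : t = i
  · subst hti
    have hrows : ∀ z : Vec m, rowsOf (Function.update k t z) t j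
        = Fin.snoc (fun c : Fin m => k (omitTwo t j c)) (z * k j) := by
      intro z
      funext u
      refine Fin.lastCases ?_ (fun c => ?_) u
      · unfold rowsOf
        rw [Fin.snoc_last, Fin.snoc_last, Function.update_self, Function.update_apply,
          if_neg (Fin.ne_of_gt hij)]
      · unfold rowsOf
        rw [Fin.snoc_castSucc, Fin.snoc_castSucc, Function.update_apply,
          if_neg (omitTwo_ne_left hij c)]
    rw [hrows, hrows, hrows, add_mul]
    exact det_snoc_add _ _ _
  by_cases htj : t = j
  · subst htj
    have hrows : ∀ z : Vec m, rowsOf (Function.update k t z) i t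
        = Fin.snoc (fun c : Fin m => k (omitTwo i t c)) (k i * z) := by
      intro z
      funext u
      refine Fin.lastCases ?_ (fun c => ?_) u
      · unfold rowsOf
        rw [Fin.snoc_last, Fin.snoc_last, Function.update_self, Function.update_apply,
          if_neg (Fin.ne_of_lt hij)]
      · unfold rowsOf
        rw [Fin.snoc_castSucc, Fin.snoc_castSucc, Function.update_apply,
          if_neg (omitTwo_ne_right hij c)]
    rw [hrows, hrows, hrows, mul_add]
    exact det_snoc_add _ _ _
  · obtain ⟨c₀, hc₀⟩ := omitTwo_surj hij (Ne.symm (fun h => hti h.symm))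
      (Ne.symm (fun h => htj h.symm))
    have hrows : ∀ z : Vec m, rowsOf (Function.update k t z) i j
        = Fin.snoc (Function.update (fun c : Fin m => k (omitTwo i j c)) c₀ z)
            (k i * k j) := by
      intro z
      funext u
      refine Fin.lastCases ?_ (fun c => ?_) u
      · unfold rowsOf
        rw [Fin.snoc_last, Fin.snoc_last, Function.update_apply, if_neg (fun h : i = t => hti h.symm),
          Function.update_apply, if_neg (fun h : j = t => htj h.symm)]
      · unfold rowsOf
        rw [Fin.snoc_castSucc, Fin.snoc_castSucc, Function.update_apply, Function.update_apply]
        by_cases hcc : c = c₀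
        · subst hcc; rw [if_pos hc₀, if_pos rfl]
        · rw [if_neg (fun h : omitTwo i j c = t =>
            hcc (omitTwo_inj hij (h.trans hc₀.symm))), if_neg hcc]
    rw [hrows, hrows, hrows]
    exact det_snoc_update_add _ _ _ _ _

lemma multilin_D₂ : Multilinear (m+1) (D₂ (m+1)) := by
  intro t k x y
  unfold D₂
  rw [← Finset.sum_add_distrib]
  refine Finset.sum_congr rfl (fun p hp => ?_)
  exact deltaIJ_update_add k t x y p.1 p.2 (Finset.mem_filter.mp hp).2

end Multilin

section Transvec

variable {m : ℕ}

/-- The transvection map `v ↦ v + v b • e_a`. -/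
def TA (a b : Fin (m+1)) (v : Vec m) : Vec m := v + v b • (Pi.single a 1 : Vec m)

lemma TA_mulVec (a b : Fin (m+1)) (v : Vec m) :
    (Matrix.transvection a b (1 : ZMod 2)).mulVec v = TA a b v := by
  funext r
  simp only [Matrix.transvection, Matrix.add_mulVec, Matrix.one_mulVec, TA, Pi.add_apply,
    Pi.smul_apply, smul_eq_mul]
  congr 1
  simp [Matrix.mulVec, dotProduct, Matrix.single, Pi.single_apply, ite_and,
    Finset.sum_ite_eq, eq_comm, dotProduct]

lemma mul_TA (a b : Fin (m+1)) (hab : a ≠ b) (u v : Vec m) :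
    TA a b u * TA a b v
      = TA a b (u * v) + (u a * v b + u b * v a) • (Pi.single a 1 : Vec m) := by
  funext r
  simp only [TA, Pi.mul_apply, Pi.add_apply, Pi.smul_apply, Pi.single_apply, smul_eq_mul]
  by_cases hr : r = a
  · subst hr; simp; ring
  · simp [hr]

lemma TA_single (a b : Fin (m+1)) (hab : a ≠ b) :
    TA a b (Pi.single a (1 : ZMod 2)) = Pi.single a 1 := by
  simp [TA, Pi.single_eq_of_ne (Ne.symm hab)]

lemma det_TA_rows (a b : Fin (m+1)) (hab : a ≠ b) (w : Fin (m+1) → Vec m) :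
    (Matrix.of (fun c => TA a b (w c))).det = (Matrix.of w).det := by
  have h : Matrix.of (fun c => TA a b (w c))
      = Matrix.of w * Matrix.transpose (Matrix.transvection a b (1 : ZMod 2)) := by
    ext c r
    rw [Matrix.mul_apply]
    have h2 := congrFun (TA_mulVec a b (w c)) r
    show TA a b (w c) r = _
    rw [← h2]
    simp [Matrix.mulVec, dotProduct, Matrix.transpose_apply, mul_comm]
  rw [h, Matrix.det_mul, Matrix.det_transpose, Matrix.det_transvection_of_ne a b hab, mul_one]

/-- The auxiliary determinant `μ_{ij}` (last row `e_a`). -/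
def muM (k : Fin (m+2) → Vec m) (a : Fin (m+1)) (i j : Fin (m+2)) : ZMod 2 :=
  (Matrix.of (Fin.snoc (fun c : Fin m => k (omitTwo i j c)) (Pi.single a 1))).det

lemma deltaIJ_TA (a b : Fin (m+1)) (hab : a ≠ b) (k : Fin (m+2) → Vec m)
    (i j : Fin (m+2)) :
    DeltaIJ (m+1) (fun t => TA a b (k t)) i j
      = DeltaIJ (m+1) k i j + (k i a * k j b + k i b * k j a) * muM k a i j := by
  rw [deltaIJ_eq, deltaIJ_eq]
  have h1 : rowsOf (fun t => TA a b (k t)) i j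
      = Fin.snoc (fun c : Fin m => TA a b (k (omitTwo i j c)))
          (TA a b (k i * k j) + (k i a * k j b + k i b * k j a) • (Pi.single a 1 : Vec m)) := by
    unfold rowsOf
    rw [mul_TA a b hab]
  rw [h1, det_snoc_add]
  congr 1
  · have h2 : Fin.snoc (fun c : Fin m => TA a b (k (omitTwo i j c))) (TA a b (k i * k j))
        = fun c => TA a b (rowsOf k i j c) := by
      funext u
      refine Fin.lastCases ?_ (fun v => ?_) u
      · rw [Fin.snoc_last]; unfold rowsOf; rw [Fin.snoc_last]
      · rw [Fin.snoc_castSucc]; unfold rowsOf; rw [Fin.snoc_castSucc]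
    rw [h2, det_TA_rows a b hab]
  · rw [det_snoc_smul]
    congr 1
    have h2 : Fin.snoc (fun c : Fin m => TA a b (k (omitTwo i j c))) ((Pi.single a 1 : Vec m))
        = fun c => TA a b ((Fin.snoc (fun c : Fin m => k (omitTwo i j c)) (Pi.single a 1) : Fin (m+1) → Vec m) c) := by
      funext u
      refine Fin.lastCases ?_ (fun v => ?_) u
      · rw [Fin.snoc_last, Fin.snoc_last, TA_single a b hab]
      · rw [Fin.snoc_castSucc, Fin.snoc_castSucc]
    rw [h2, det_TA_rows a b hab]
    rfl

end Transvec

section Cramer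

variable {m : ℕ}

/-- Symmetrised `μ`. -/
def nuM (k : Fin (m+2) → Vec m) (a : Fin (m+1)) (i j : Fin (m+2)) : ZMod 2 :=
  if i < j then muM k a i j else muM k a j i

/-- The degenerate matrix implementing the Cramer-type identity. -/
def Zmat (k : Fin (m+2) → Vec m) (a b : Fin (m+1)) (i : Fin (m+2)) :
    Matrix (Fin (m+2)) (Fin (m+2)) (ZMod 2) :=
  Matrix.of (Fin.snoc
    (fun s : Fin (m+1) =>
      (Fin.snoc (k (i.succAbove s)) (k (i.succAbove s) b) : Fin (m+2) → ZMod 2))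
    (Fin.snoc (Pi.single a 1) 0 : Fin (m+2) → ZMod 2))

lemma Zmat_row_castSucc (k : Fin (m+2) → Vec m) (a b : Fin (m+1)) (i : Fin (m+2))
    (s : Fin (m+1)) :
    Zmat k a b i (Fin.castSucc s)
      = (Fin.snoc (k (i.succAbove s)) (k (i.succAbove s) b) : Fin (m+2) → ZMod 2) := by
  show (Fin.snoc
    (fun s : Fin (m+1) =>
      (Fin.snoc (k (i.succAbove s)) (k (i.succAbove s) b) : Fin (m+2) → ZMod 2))
    (Fin.snoc (Pi.single a 1) 0 : Fin (m+2) → ZMod 2)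
    : Fin (m+2) → Fin (m+2) → ZMod 2) (Fin.castSucc s) = _
  rw [Fin.snoc_castSucc]

lemma Zmat_row_last (k : Fin (m+2) → Vec m) (a b : Fin (m+1)) (i : Fin (m+2)) :
    Zmat k a b i (Fin.last (m+1))
      = (Fin.snoc (Pi.single a 1) 0 : Fin (m+2) → ZMod 2) := by
  show (Fin.snoc
    (fun s : Fin (m+1) =>
      (Fin.snoc (k (i.succAbove s)) (k (i.succAbove s) b) : Fin (m+2) → ZMod 2))
    (Fin.snoc (Pi.single a 1) 0 : Fin (m+2) → ZMod 2)
    : Fin (m+2) → Fin (m+2) → ZMod 2) (Fin.last (m+1)) = _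
  rw [Fin.snoc_last]

lemma Zmat_det_zero (k : Fin (m+2) → Vec m) (a b : Fin (m+1)) (hab : a ≠ b)
    (i : Fin (m+2)) : (Zmat k a b i).det = 0 := by
  rw [← Matrix.det_transpose]
  refine Matrix.det_zero_of_row_eq (i := Fin.castSucc b) (j := Fin.last (m+1))
    (Fin.ne_of_lt (Fin.castSucc_lt_last b)) ?_
  funext r
  show Zmat k a b i r (Fin.castSucc b) = Zmat k a b i r (Fin.last (m+1))
  refine Fin.lastCases ?_ (fun s => ?_) r
  · rw [Zmat_row_last, Fin.snoc_castSucc, Fin.snoc_last,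
      Pi.single_eq_of_ne (Ne.symm hab)]
  · rw [Zmat_row_castSucc, Fin.snoc_castSucc, Fin.snoc_last]

lemma Zmat_minor (k : Fin (m+2) → Vec m) (a b : Fin (m+1)) (i : Fin (m+2))
    (s : Fin (m+1)) :
    (Zmat k a b i).submatrix (Fin.castSucc s).succAbove Fin.castSucc
      = Matrix.of (Fin.snoc (fun v : Fin m => k (i.succAbove (s.succAbove v)))
          (Pi.single a 1)) := by
  ext u c
  simp only [Matrix.submatrix_apply]
  refine Fin.lastCases ?_ (fun v => ?_) u
  · have h1 : (Fin.castSucc s).succAbove (Fin.last m) = Fin.last (m+1) := by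
      rw [Fin.ext_iff, succAbove_val]
      have hs := s.isLt
      simp only [Fin.coe_castSucc, Fin.val_last]
      rw [if_neg (by omega)]
    rw [h1, Zmat_row_last, Fin.snoc_castSucc]
    show _ = (Fin.snoc (fun v : Fin m => k (i.succAbove (s.succAbove v)))
        (Pi.single a 1) : Fin (m+1) → Vec m) (Fin.last m) c
    rw [Fin.snoc_last]
  · rw [Fin.castSucc_succAbove_castSucc, Zmat_row_castSucc, Fin.snoc_castSucc]
    show _ = (Fin.snoc (fun v : Fin m => k (i.succAbove (s.succAbove v)))
        (Pi.single a 1) : Fin (m+1) → Vec m) (Fin.castSucc v) c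
    rw [Fin.snoc_castSucc]

lemma Zmat_det_expand (k : Fin (m+2) → Vec m) (a b : Fin (m+1)) (i : Fin (m+2)) :
    (Zmat k a b i).det
      = ∑ s : Fin (m+1), k (i.succAbove s) b * nuM k a i (i.succAbove s) := by
  rw [Matrix.det_succ_column (Zmat k a b i) (Fin.last (m+1))]
  have hsign : ∀ e : ℕ, ((-1 : ZMod 2)) ^ e = 1 := fun e => by
    rw [(by decide : (-1 : ZMod 2) = 1), one_pow]
  simp only [hsign, one_mul, Fin.succAbove_last]
  rw [Fin.sum_univ_castSucc]
  have hlast : Zmat k a b i (Fin.last (m+1)) (Fin.last (m+1)) = 0 := by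
    rw [Zmat_row_last, Fin.snoc_last]
  rw [hlast, zero_mul, add_zero]
  refine Finset.sum_congr rfl (fun s _ => ?_)
  have hentry : Zmat k a b i (Fin.castSucc s) (Fin.last (m+1)) = k (i.succAbove s) b := by
    rw [Zmat_row_castSucc, Fin.snoc_last]
  rw [hentry, Zmat_minor]
  congr 1
  rcases (Fin.succAbove_ne i s).lt_or_gt with h | h
  · have hrows : (fun v : Fin m => k (i.succAbove (s.succAbove v)))
        = fun v : Fin m => k (omitTwo (i.succAbove s) i v) := by
      funext v; rw [succAbove_succAbove_gt i s v h]
    rw [nuM, if_neg (not_lt.mpr (le_of_lt h)), muM, hrows]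
  · have hrows : (fun v : Fin m => k (i.succAbove (s.succAbove v)))
        = fun v : Fin m => k (omitTwo i (i.succAbove s) v) := by
      funext v; rw [succAbove_succAbove_lt i s v h]
    rw [nuM, if_pos h, muM, hrows]

lemma cramer (k : Fin (m+2) → Vec m) (a b : Fin (m+1)) (hab : a ≠ b) (i : Fin (m+2)) :
    ∑ s : Fin (m+1), k (i.succAbove s) b * nuM k a i (i.succAbove s) = 0 := by
  rw [← Zmat_det_expand, Zmat_det_zero k a b hab]

lemma sum_lambda_mu (k : Fin (m+2) → Vec m) (a b : Fin (m+1)) (hab : a ≠ b) :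
    ∑ p ∈ Finset.univ.filter (fun p : Fin (m+2) × Fin (m+2) => p.1 < p.2),
      (k p.1 a * k p.2 b + k p.1 b * k p.2 a) * muM k a p.1 p.2 = 0 := by
  set g : Fin (m+2) × Fin (m+2) → ZMod 2 :=
    fun p => k p.1 a * k p.2 b * nuM k a p.1 p.2 with hg
  have step1 : ∑ p ∈ Finset.univ.filter (fun p : Fin (m+2) × Fin (m+2) => p.1 < p.2),
      (k p.1 a * k p.2 b + k p.1 b * k p.2 a) * muM k a p.1 p.2
      = ∑ p ∈ Finset.univ.filter (fun p : Fin (m+2) × Fin (m+2) => p.1 < p.2),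
        (g p + g p.swap) := by
    refine Finset.sum_congr rfl (fun p hp => ?_)
    have hlt : p.1 < p.2 := (Finset.mem_filter.mp hp).2
    simp only [hg, Prod.fst_swap, Prod.snd_swap, nuM, if_pos hlt,
      if_neg (not_lt.mpr (le_of_lt hlt))]
    ring
  rw [step1, Finset.sum_add_distrib]
  have step2 : ∑ p ∈ Finset.univ.filter (fun p : Fin (m+2) × Fin (m+2) => p.1 < p.2),
      g p.swap
      = ∑ p ∈ Finset.univ.filter (fun p : Fin (m+2) × Fin (m+2) => p.2 < p.1), g p := by
    refine Finset.sum_equiv (Equiv.prodComm _ _) (fun p => ?_) (fun p _ => rfl)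
    simp only [Finset.mem_filter, Finset.mem_univ, true_and, Equiv.prodComm_apply,
      Prod.fst_swap, Prod.snd_swap]
  have step3 : ∑ p ∈ Finset.univ.filter (fun p : Fin (m+2) × Fin (m+2) => p.1 < p.2), g p
      + ∑ p ∈ Finset.univ.filter (fun p : Fin (m+2) × Fin (m+2) => p.2 < p.1), g p
      = ∑ p ∈ Finset.univ.filter (fun p : Fin (m+2) × Fin (m+2) => p.1 ≠ p.2), g p := by
    rw [← Finset.sum_union]
    · congr 1
      ext p
      simp only [Finset.mem_union, Finset.mem_filter, Finset.mem_univ, true_and]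
      constructor
      · rintro (h | h)
        · exact ne_of_lt h
        · exact ne_of_gt h
      · intro h
        rcases lt_or_gt_of_ne h with h' | h'
        · exact Or.inl h'
        · exact Or.inr h'
    · rw [Finset.disjoint_left]
      intro p hp hp'
      have h1 := (Finset.mem_filter.mp hp).2
      have h2 := (Finset.mem_filter.mp hp').2
      exact absurd (h1.trans h2) (lt_irrefl _)
  rw [step2, step3]
  rw [Finset.sum_filter]
  rw [Fintype.sum_prod_type]
  have inner : ∀ i : Fin (m+2),
      (∑ j : Fin (m+2), if (i, j).1 ≠ (i, j).2 then g (i, j) else 0) = 0 := by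
    intro i
    have : ∀ j : Fin (m+2), (if (i, j).1 ≠ (i, j).2 then g (i, j) else 0)
        = k i a * (if i ≠ j then k j b * nuM k a i j else 0) := by
      intro j
      by_cases h : i = j
      · simp [h]
      · simp only [h, ne_eq, not_false_iff, if_true, hg]
        ring
    rw [Finset.sum_congr rfl (fun j _ => this j), ← Finset.mul_sum]
    have hin : (∑ j : Fin (m+2), if i ≠ j then k j b * nuM k a i j else 0) = 0 := by
      rw [Fin.sum_univ_succAbove (fun j => if i ≠ j then k j b * nuM k a i j else 0) i]
      simp only [ne_eq, not_true, if_false]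
      rw [zero_add]
      have : ∀ s : Fin (m+1),
          (if i ≠ i.succAbove s then k (i.succAbove s) b * nuM k a i (i.succAbove s) else 0)
            = k (i.succAbove s) b * nuM k a i (i.succAbove s) := by
        intro s
        rw [if_pos (Ne.symm (Fin.succAbove_ne i s))]
      rw [Finset.sum_congr rfl (fun s _ => this s)]
      exact cramer k a b hab i
    rw [hin, mul_zero]
  rw [Finset.sum_congr rfl (fun i _ => inner i), Finset.sum_const, smul_zero]

lemma D₂_TA (a b : Fin (m+1)) (hab : a ≠ b) (k : Fin (m+2) → Vec m) :
    D₂ (m+1) (fun t => TA a b (k t)) = D₂ (m+1) k := by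
  unfold D₂
  rw [Finset.sum_congr rfl (fun p _ => deltaIJ_TA a b hab k p.1 p.2),
    Finset.sum_add_distrib, sum_lambda_mu k a b hab, add_zero]

end Cramer

section GLSec

variable {m : ℕ}

lemma glinv : GLInvariant (m+1) (D₂ (m+1)) := by
  intro A k
  set M := LinearMap.toMatrix' (A.toLinearMap) with hM
  have hMv : ∀ v, M.mulVec v = A v := by
    intro v
    have h := Matrix.toLin'_toMatrix' (A.toLinearMap)
    calc M.mulVec v = Matrix.toLin' M v := (Matrix.toLin'_apply M v).symm
    _ = A v := by rw [hM, h]; rfl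
  have hdet : IsUnit M.det := by
    rw [hM, LinearMap.det_toMatrix']
    exact A.isUnit_det'
  have key : ∀ kk, D₂ (m+1) (fun t => M.mulVec (kk t)) = D₂ (m+1) kk := by
    refine Matrix.diagonal_transvection_induction
      (fun N => ∀ kk, D₂ (m+1) (fun t => N.mulVec (kk t)) = D₂ (m+1) kk) M ?_ ?_ ?_
    · intro D hD kk
      have hunit : IsUnit (Matrix.diagonal D).det := hD ▸ hdet
      have hD1 : ∀ r, D r = 1 := by
        intro r
        rw [Matrix.det_diagonal] at hunit
        have hne : D r ≠ 0 := by
          intro h0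
          exact hunit.ne_zero (Finset.prod_eq_zero (Finset.mem_univ r) h0)
        revert hne
        generalize D r = x
        revert x
        decide
      have hDone : Matrix.diagonal D = 1 := by
        rw [show D = fun _ => (1 : ZMod 2) from funext hD1, Matrix.diagonal_one]
      simp only [hDone, Matrix.one_mulVec]
    · intro t kk
      rcases t with ⟨a, b, hab, c⟩
      rcases (by decide : ∀ x : ZMod 2, x = 0 ∨ x = 1) c with hc | hc
      · subst hc
        have h1 : Matrix.TransvectionStruct.toMatrix
            (⟨a, b, hab, 0⟩ : Matrix.TransvectionStruct (Fin (m+1)) (ZMod 2)) = 1 := by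
          rw [Matrix.TransvectionStruct.toMatrix_mk, Matrix.transvection,
            Matrix.single_zero, add_zero]
        simp only [h1, Matrix.one_mulVec]
      · subst hc
        have h1 : (fun t' => (Matrix.TransvectionStruct.toMatrix
            (⟨a, b, hab, 1⟩ : Matrix.TransvectionStruct (Fin (m+1)) (ZMod 2))).mulVec (kk t'))
            = fun t' => TA a b (kk t') := by
          funext t'
          rw [Matrix.TransvectionStruct.toMatrix_mk, TA_mulVec]
        rw [h1]
        exact D₂_TA a b hab kk
    · intro P Q hP hQ kk
      have h1 : (fun t => (P * Q).mulVec (kk t)) = fun t => P.mulVec (Q.mulVec (kk t)) := by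
        funext t
        rw [Matrix.mulVec_mulVec]
      rw [h1]
      exact (hP (fun t => Q.mulVec (kk t))).trans (hQ kk)
  have h2 : (fun t => A (k t)) = fun t => M.mulVec (k t) :=
    funext fun t => (hMv (k t)).symm
  rw [h2]
  exact key k

lemma rankvan : RankVanishing (m+1) (D₂ (m+1)) := by
  intro k hk
  have hlt : Submodule.span (ZMod 2) (Set.range k) < ⊤ := lt_top_iff_ne_top.mpr hk
  obtain ⟨f, hf0, hfmap⟩ :=
    Submodule.exists_dual_map_eq_bot_of_lt_top hlt inferInstance
  have hker : ∀ t, f (k t) = 0 := by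
    intro t
    have h1 : k t ∈ Submodule.span (ZMod 2) (Set.range k) :=
      Submodule.subset_span ⟨t, rfl⟩
    have h2 : f (k t) ∈ (Submodule.span (ZMod 2) (Set.range k)).map f := ⟨k t, h1, rfl⟩
    rw [hfmap] at h2
    simpa using h2
  obtain ⟨u, hu⟩ : ∃ u, f u ≠ 0 := by
    by_contra h
    push_neg at h
    exact hf0 (LinearMap.ext fun v => by simp [h v])
  have hu1 : f u = 1 := by
    revert hu; generalize f u = x; revert x; decide
  have hrange : LinearMap.range f = ⊤ := by
    rw [eq_top_iff]
    rintro x -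
    exact ⟨x • u, by rw [map_smul, hu1, smul_eq_mul, mul_one]⟩
  have hK : Module.finrank (ZMod 2) (LinearMap.ker f) = m := by
    have h1 := f.finrank_range_add_finrank_ker
    rw [hrange, finrank_top] at h1
    have h2 : Module.finrank (ZMod 2) (ZMod 2) = 1 := Module.finrank_self _
    have h3 : Module.finrank (ZMod 2) (Vec m) = m + 1 := by
      simp [Module.finrank_pi]
    rw [h2, h3] at h1
    omega
  set K := LinearMap.ker f with hKdef
  let bK : Module.Basis (Fin m) (ZMod 2) K := Module.finBasisOfFinrankEq _ _ hK
  set w : Fin (m+1) → Vec m := Fin.cons u (fun s => (bK s : Vec m)) with hw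
  have hbKlin : LinearIndependent (ZMod 2) (fun s => (bK s : Vec m)) := by
    have := bK.linearIndependent
    exact this.map' K.subtype (Submodule.ker_subtype K)
  have hspanbK : Submodule.span (ZMod 2) (Set.range (fun s => (bK s : Vec m))) = K := by
    have h1 : (fun s => (bK s : Vec m)) = K.subtype ∘ bK := rfl
    rw [h1, Set.range_comp, ← Submodule.map_span, bK.span_eq, Submodule.map_subtype_top]
  have hlin : LinearIndependent (ZMod 2) w := by
    refine LinearIndependent.fin_cons hbKlin ?_
    rw [hspanbK]
    intro hmem
    rw [hKdef, LinearMap.mem_ker, hu1] at hmem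
    exact one_ne_zero hmem
  have hcard : Fintype.card (Fin (m+1)) = Module.finrank (ZMod 2) (Vec m) := by
    simp [Module.finrank_pi]
  let B : Module.Basis (Fin (m+1)) (ZMod 2) (Vec m) :=
    basisOfLinearIndependentOfCardEqFinrank hlin hcard
  have hB : ⇑B = w := coe_basisOfLinearIndependentOfCardEqFinrank hlin hcard
  let E := Pi.basisFun (ZMod 2) (Fin (m+1))
  let A : (Vec m) ≃ₗ[ZMod 2] (Vec m) := B.equiv E (Equiv.refl _)
  have hAbK : ∀ s : Fin m, A (bK s : Vec m) = Pi.single (Fin.succ s) 1 := by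
    intro s
    have h1 : (bK s : Vec m) = B (Fin.succ s) := by
      rw [hB, hw, Fin.cons_succ]
    rw [h1]
    have h2 : A (B (Fin.succ s)) = E (Equiv.refl _ (Fin.succ s)) :=
      B.equiv_apply (e := Equiv.refl _) (Fin.succ s) E
    rw [h2]
    show (Pi.basisFun (ZMod 2) (Fin (m+1))) (Fin.succ s) = _
    rw [Pi.basisFun_apply]
  have hA0 : ∀ v ∈ K, A v (0 : Fin (m+1)) = 0 := by
    intro v hv
    have h1 : v ∈ Submodule.span (ZMod 2) (Set.range (fun s => (bK s : Vec m))) := by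
      rw [hspanbK]; exact hv
    have h2 : A v ∈ (Submodule.span (ZMod 2)
        (Set.range (fun s => (bK s : Vec m)))).map A.toLinearMap :=
      Submodule.mem_map_of_mem h1
    rw [Submodule.map_span] at h2
    have h3 : ⇑A.toLinearMap '' Set.range (fun s => (bK s : Vec m))
        ⊆ {x : Vec m | x 0 = 0} := by
      rintro x ⟨y, ⟨s, rfl⟩, rfl⟩
      show A (bK s : Vec m) 0 = 0
      rw [hAbK s]
      exact Pi.single_eq_of_ne (Ne.symm (Fin.succ_ne_zero s)) 1
    have h4 : Submodule.span (ZMod 2) (⇑A.toLinearMap '' Set.range (fun s => (bK s : Vec m)))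
        ≤ LinearMap.ker (LinearMap.proj (R := ZMod 2) (φ := fun _ : Fin (m+1) => ZMod 2) 0) := by
      rw [Submodule.span_le]
      intro x hx
      exact h3 hx
    exact h4 h2
  have hk0 : ∀ t, A (k t) 0 = 0 := fun t => hA0 (k t) (LinearMap.mem_ker.mpr (hker t))
  have hD0 : D₂ (m+1) (fun t => A (k t)) = 0 := by
    unfold D₂
    refine Finset.sum_eq_zero (fun p hp => ?_)
    unfold DeltaIJ
    refine Matrix.det_eq_zero_of_row_eq_zero 0 (fun c => ?_)
    simp only [Matrix.of_apply]
    split_ifs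
    · exact hk0 _
    · rw [hk0 p.1, zero_mul]
  rw [← glinv A k, hD0]

end GLSec

section Nonzero

variable {m : ℕ}

/-- Witness tuple: `e₀, e₁, …, e_m, e₀`. -/
def k₀ (m : ℕ) : Fin (m+2) → Vec m := fun t =>
  if h : (t : ℕ) < m + 1 then Pi.single ⟨(t : ℕ), h⟩ 1 else Pi.single 0 1

lemma single_mul_single_ne (v1 v2 : Fin (m+1)) (h : v1 ≠ v2) :
    (Pi.single v1 1 : Vec m) * Pi.single v2 1 = 0 := by
  funext r
  simp only [Pi.mul_apply, Pi.zero_apply]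
  rcases eq_or_ne r v1 with h1 | h1
  · subst h1
    rw [Pi.single_eq_of_ne h 1, mul_zero]
  · rw [Pi.single_eq_of_ne h1, zero_mul]

lemma delta_k0_zero (i j : Fin (m+2)) (hij : i < j)
    (hne : ¬(i = 0 ∧ j = Fin.last (m+1))) : DeltaIJ (m+1) (k₀ m) i j = 0 := by
  have hprod : k₀ m i * k₀ m j = 0 := by
    have hij' : (i : ℕ) < (j : ℕ) := hij
    have hi : (i : ℕ) < m + 1 := by have := j.isLt; omega
    by_cases hj : (j : ℕ) < m + 1
    · rw [k₀, k₀]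
      rw [dif_pos hi, dif_pos hj]
      exact single_mul_single_ne _ _ (fun hh => by
        have := congrArg Fin.val hh
        simp only [Fin.val_mk] at this
        omega)
    · have hi0 : (i : ℕ) ≠ 0 := by
        intro h0
        exact hne ⟨Fin.ext h0, Fin.ext (by have := j.isLt; simp [Fin.val_last]; omega)⟩
      rw [k₀, k₀]
      rw [dif_pos hi, dif_neg hj]
      exact single_mul_single_ne _ _ (fun hh => by
        have := congrArg Fin.val hh
        simp only [Fin.val_mk, Fin.val_zero] at this
        omega)
  unfold DeltaIJ
  refine Matrix.det_eq_zero_of_column_eq_zero (Fin.last m) (fun r => ?_)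
  simp only [Matrix.of_apply]
  rw [dif_neg (by simp)]
  exact congrFun hprod r

lemma delta_k0_main : DeltaIJ (m+1) (k₀ m) 0 (Fin.last (m+1)) = 1 := by
  set σ := finRotate (m+1) with hσ
  have hmat : (Matrix.of fun r c : Fin (m+1) =>
      if h : (c : ℕ) < m + 1 - 1 then k₀ m (omitTwo 0 (Fin.last (m+1)) ⟨c, h⟩) r
      else k₀ m 0 r * k₀ m (Fin.last (m+1)) r)
      = (Equiv.Perm.permMatrix (ZMod 2) σ).transpose := by
    ext r c
    rw [Matrix.transpose_apply]
    have hperm : Equiv.Perm.permMatrix (ZMod 2) σ c r = if σ c = r then 1 else 0 := by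
      rw [Equiv.Perm.permMatrix, PEquiv.toMatrix_apply, Equiv.toPEquiv_apply]
      simp [Option.mem_some_iff, eq_comm]
    rw [hperm, Matrix.of_apply]
    by_cases hc : (c : ℕ) < m + 1 - 1
    · rw [dif_pos hc]
      have homit : ((omitTwo 0 (Fin.last (m+1)) ⟨c, hc⟩ : Fin (m+2)) : ℕ) = (c : ℕ) + 1 := by
        rw [omitTwo_val]
        simp only [Fin.val_mk, Fin.val_zero, Fin.val_last]
        rw [if_neg (by omega), if_pos (by omega)]
      have hval : ((omitTwo 0 (Fin.last (m+1)) ⟨c, hc⟩ : Fin (m+2)) : ℕ) < m + 1 := by omega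
      rw [k₀, dif_pos hval]
      have hσc : σ c = ⟨(c : ℕ) + 1, by omega⟩ := by
        rw [hσ, finRotate_succ_apply, Fin.ext_iff, Fin.val_add_one]
        rw [if_neg (fun hh : c = Fin.last m => by
          rw [hh, Fin.val_last] at hc; omega)]
      have hidx : (⟨((omitTwo 0 (Fin.last (m+1)) ⟨c, hc⟩ : Fin (m+2)) : ℕ), hval⟩ : Fin (m+1))
          = ⟨(c : ℕ) + 1, by omega⟩ := Fin.ext homit
      rw [hidx, hσc, Pi.single_apply]
      simp [eq_comm]
    · rw [dif_neg hc]
      have hc' : (c : ℕ) = m := by have := c.isLt; omega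
      have h0 : k₀ m 0 = Pi.single (0 : Fin (m+1)) 1 := by
        rw [k₀, dif_pos (by simp)]
        congr 1
      have hlastval : ¬ ((Fin.last (m+1) : Fin (m+2)) : ℕ) < m + 1 := by simp
      have hlast : k₀ m (Fin.last (m+1)) = Pi.single (0 : Fin (m+1)) 1 := by
        rw [k₀, dif_neg hlastval]
      rw [h0, hlast]
      have hσc : σ c = 0 := by
        have hcl : c = Fin.last m := Fin.ext (by simp [hc'])
        rw [hσ, hcl, finRotate_succ_apply, Fin.ext_iff, Fin.val_add_one, if_pos rfl]
        rfl
      rw [hσc, Pi.single_apply]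
      rcases eq_or_ne r 0 with hr | hr
      · subst hr; simp
      · simp [hr, Ne.symm hr]
  unfold DeltaIJ
  rw [hmat, Matrix.det_transpose, Matrix.det_permutation]
  rcases Int.units_eq_one_or (Equiv.Perm.sign σ) with h | h <;> rw [h] <;> decide

lemma D2_k0 : D₂ (m+1) (k₀ m) = 1 := by
  unfold D₂
  rw [Finset.sum_eq_single ((0, Fin.last (m+1)) : Fin (m+2) × Fin (m+2))]
  · exact delta_k0_main
  · intro p hp hne
    refine delta_k0_zero p.1 p.2 (Finset.mem_filter.mp hp).2 ?_
    rintro ⟨h1, h2⟩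
    exact hne (Prod.ext h1 h2)
  · intro habs
    exfalso
    apply habs
    rw [Finset.mem_filter]
    exact ⟨Finset.mem_univ _, by
      show (0 : Fin (m+2)) < Fin.last (m+1)
      rw [Fin.lt_def]
      simp⟩

end Nonzero

end Aux

/-- The function `D₂` is GL-invariant, rank-vanishing, multilinear and not
identically zero. -/
theorem stmt9 (n : ℕ) (hn : 1 ≤ n) :
    GLInvariant n (D₂ n) ∧ RankVanishing n (D₂ n) ∧ Multilinear n (D₂ n) ∧
      D₂ n ≠ fun _ => 0 := by
  obtain ⟨m, rfl⟩ : ∃ m, n = m + 1 := ⟨n - 1, by omega⟩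
  refine ⟨Aux.glinv, Aux.rankvan, Aux.multilin_D₂, ?_⟩
  intro h
  have h1 := congrFun h (Aux.k₀ m)
  rw [Aux.D2_k0] at h1
  exact one_ne_zero h1
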